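/- Let p : ℝ³ → ℝ³ be twice continuously differentiable and suppose its symmetric gradient vanishes identically, i.e. ⟨Dp(x) v, w⟩ + ⟨Dp(x) w, v⟩ = 0 for all x, v, w ∈ ℝ³. Then there exist α, ω ∈ ℝ³ such that p(x) = α + ω ×ᵥ x for all x ∈ ℝ³; that is, p is a rigid body motion. -/

import Mathlib

open Matrix

/-- Dot product with a fixed vector, as a continuous linear map. -/
noncomputable def dotCLM (w : Fin 3 → ℝ) : (Fin 3 → ℝ) →L[ℝ] ℝ :=
  LinearMap.toContinuousLinearMap
    { toFun := fun u => u ⬝ᵥ w,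
      map_add' := fun a b => add_dotProduct a b w,
      map_smul' := fun c a => smul_dotProduct c a w }

@[simp] lemma dotCLM_apply (w u : Fin 3 → ℝ) : dotCLM w u = u ⬝ᵥ w := rfl

/-- A `C²` vector field on `ℝ³` whose symmetric gradient vanishes
identically is a rigid body motion `x ↦ α + ω ×ᵥ x`. -/
theorem rigid_body_motion_of_symmetric_gradient_eq_zero
    (p : (Fin 3 → ℝ) → (Fin 3 → ℝ)) (hp : ContDiff ℝ 2 p)
    (hsym : ∀ x v w, (fderiv ℝ p x v) ⬝ᵥ w + (fderiv ℝ p x w) ⬝ᵥ v = 0) :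
    ∃ α ω : Fin 3 → ℝ, ∀ x, p x = α + ω ⨯₃ x := by
  classical
  have hf1 : ContDiff ℝ 1 (fderiv ℝ p) := hp.fderiv_right (by norm_num)
  have hfd : Differentiable ℝ (fderiv ℝ p) := hf1.differentiable (by norm_num)
  have hpd : Differentiable ℝ p := hp.differentiable (by norm_num)
  set g : (Fin 3 → ℝ) → (Fin 3 → ℝ) →L[ℝ] (Fin 3 → ℝ) →L[ℝ] (Fin 3 → ℝ) :=
    fun x => fderiv ℝ (fderiv ℝ p) x with hg
  have key : ∀ (x v w : Fin 3 → ℝ), HasFDerivAt (fun y => (fderiv ℝ p y v) ⬝ᵥ w)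
      (((dotCLM w).comp (ContinuousLinearMap.apply ℝ (Fin 3 → ℝ) v)).comp (g x)) x := by
    intro x v w
    exact (((dotCLM w).comp (ContinuousLinearMap.apply ℝ (Fin 3 → ℝ) v)).hasFDerivAt).comp x
      (hfd x).hasFDerivAt
  have hsecond : ∀ x u v w : Fin 3 → ℝ, (g x u v) ⬝ᵥ w + (g x u w) ⬝ᵥ v = 0 := by
    intro x u v w
    have hsum := (key x v w).add (key x w v)
    have heq : (fun y => (fderiv ℝ p y v) ⬝ᵥ w + (fderiv ℝ p y w) ⬝ᵥ v) =
        (fun _ : Fin 3 → ℝ => (0 : ℝ)) := funext fun y => hsym y v w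
    rw [show ((fun y => (fderiv ℝ p y v) ⬝ᵥ w) + fun y => (fderiv ℝ p y w) ⬝ᵥ v) = _ from heq] at hsum
    have h0 := hsum.unique (hasFDerivAt_const 0 x)
    have := DFunLike.congr_fun h0 u
    simpa using this
  have hclair : ∀ x u v : Fin 3 → ℝ, g x u v = g x v u := fun x u v =>
    (hp.contDiffAt.isSymmSndFDerivAt (by simp [minSmoothness_of_isRCLikeNormedField])) u v
  have hskew : ∀ x u v w : Fin 3 → ℝ, (g x u v) ⬝ᵥ w = -((g x u w) ⬝ᵥ v) := by
    intro x u v w; linarith [hsecond x u v w]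
  have hT : ∀ x u v w : Fin 3 → ℝ, (g x u v) ⬝ᵥ w = 0 := by
    intro x u v w
    have h1 := hskew x u v w
    have h2 : (g x u w) ⬝ᵥ v = (g x w u) ⬝ᵥ v := by rw [hclair x u w]
    have h3 := hskew x w u v
    have h4 : (g x w v) ⬝ᵥ u = (g x v w) ⬝ᵥ u := by rw [hclair x w v]
    have h5 := hskew x v w u
    have h6 : (g x v u) ⬝ᵥ w = (g x u v) ⬝ᵥ w := by rw [hclair x v u]
    linarith
  have hg0 : ∀ x, g x = 0 := by
    intro x
    ext u v i
    have := hT x u v (Pi.single i 1)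
    simpa [dotProduct_single] using this
  have hconst : ∀ x, fderiv ℝ p x = fderiv ℝ p 0 := fun x =>
    is_const_of_fderiv_eq_zero hfd hg0 x 0
  set A : (Fin 3 → ℝ) →L[ℝ] (Fin 3 → ℝ) := fderiv ℝ p 0 with hA
  have haff : ∀ x, p x = p 0 + A x := by
    intro x
    have hd : Differentiable ℝ (fun y => p y - A y) := hpd.sub A.differentiable
    have hz : ∀ y, fderiv ℝ (fun y => p y - A y) y = 0 := by
      intro y
      have h1 : HasFDerivAt (fun y => p y - A y) (fderiv ℝ p y - A) y :=
        (hpd y).hasFDerivAt.sub A.hasFDerivAt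
      rw [h1.fderiv, hconst y, hA]; simp
    have h0 : p x - A x = p 0 - A 0 := is_const_of_fderiv_eq_zero hd hz x 0
    rw [A.map_zero, sub_zero] at h0
    linear_combination (norm := module) h0
  have hAskew : ∀ v w : Fin 3 → ℝ, (A v) ⬝ᵥ w + (A w) ⬝ᵥ v = 0 := fun v w => hsym 0 v w
  set e : Fin 3 → (Fin 3 → ℝ) := fun i => Pi.single i 1 with he
  set a : Fin 3 → Fin 3 → ℝ := fun i j => A (e j) i with ha
  have haa : ∀ i j, a i j + a j i = 0 := by
    intro i j
    have := hAskew (e j) (e i)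
    simpa [ha, he, dotProduct_single] using this
  refine ⟨p 0, ![a 2 1, a 0 2, a 1 0], fun x => ?_⟩
  rw [haff x]
  congr 1
  have hx : x = x 0 • e 0 + x 1 • e 1 + x 2 • e 2 := by
    funext i; fin_cases i <;> simp [he]
  have hAx : A x = x 0 • A (e 0) + x 1 • A (e 1) + x 2 • A (e 2) := by
    conv_lhs => rw [hx]
    simp [_root_.map_add, _root_.map_smul]
  have h00 : a 0 0 = 0 := by have := haa 0 0; linarith
  have h11 : a 1 1 = 0 := by have := haa 1 1; linarith
  have h22 : a 2 2 = 0 := by have := haa 2 2; linarith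
  have h01 : a 0 1 = -a 1 0 := by have := haa 0 1; linarith
  have h02 : a 0 2 = -a 2 0 := by have := haa 0 2; linarith
  have h12 : a 1 2 = -a 2 1 := by have := haa 1 2; linarith
  funext i
  rw [hAx]
  have hval : ∀ j i, A (e j) i = a i j := by intro j i; rfl
  fin_cases i <;>
    simp [cross_apply, Pi.add_apply, Pi.smul_apply, hval, h00, h11, h22, h01, h02, h12] <;>
    ring
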